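/- An unweighted graph contains an induced subgraph on at most k vertices with density at least (k−1)/2 if and only if it contains a clique on k vertices. (Hence the densest at-most-k-subgraph problem is NP-complete.) -/
import Mathlib


open Finset

/-- Density of the subgraph of a simple graph induced on `S`: each unordered
edge inside `S` is counted twice in the filter, hence the division by `2·|S|`. -/
noncomputable def udens {V : Type*} [Fintype V] [DecidableEq V] (G : SimpleGraph V)
    [DecidableRel G.Adj] (S : Finset V) : ℝ :=
  (((S ×ˢ S).filter fun p => G.Adj p.1 p.2).card : ℝ) / (2 * S.card)

lemma filter_subset_offDiag {V : Type*} [Fintype V] [DecidableEq V] (G : SimpleGraph V)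
    [DecidableRel G.Adj] (S : Finset V) :
    ((S ×ˢ S).filter fun p => G.Adj p.1 p.2) ⊆ S.offDiag := by
  intro p hp
  simp only [mem_filter, mem_product] at hp
  exact Finset.mem_offDiag.mpr ⟨hp.1.1, hp.1.2, hp.2.ne⟩

/-- an unweighted graph has an induced subgraph on at most k
vertices of density at least (k−1)/2 iff it contains a k-clique. -/
theorem stmt17 {V : Type*} [Fintype V] [DecidableEq V] (G : SimpleGraph V)
    [DecidableRel G.Adj] (k : ℕ) (hk : 1 ≤ k) :
    (∃ S : Finset V, S.Nonempty ∧ S.card ≤ k ∧ ((k : ℝ) - 1) / 2 ≤ udens G S) ↔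
    ∃ S : Finset V, S.card = k ∧ (S : Set V).Pairwise G.Adj := by
  constructor
  · rintro ⟨S, hne, hcard, hdens⟩
    set F := (S ×ˢ S).filter fun p => G.Adj p.1 p.2 with hF
    have hsub := filter_subset_offDiag G S
    have hFle : F.card ≤ S.card * S.card - S.card := by
      simpa [Finset.offDiag_card] using Finset.card_le_card hsub
    have hn1 : 1 ≤ S.card := hne.card_pos
    have hnpos : (0:ℝ) < S.card := by exact_mod_cast hn1
    -- from density: (k-1) * n ≤ F.card
    have h1 : ((k:ℝ) - 1) * S.card ≤ F.card := by
      have := (div_le_div_iff₀ (by norm_num) (by positivity)).mp hdens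
      nlinarith
    have h2 : (F.card : ℝ) ≤ S.card * S.card - S.card := by
      have : (F.card : ℝ) ≤ ((S.card * S.card - S.card : ℕ) : ℝ) := by exact_mod_cast hFle
      have hle : S.card ≤ S.card * S.card := Nat.le_mul_of_pos_left _ hn1
      push_cast [hle] at this
      linarith
    have hkn : k ≤ S.card := by
      have : (k:ℝ) ≤ S.card := by nlinarith
      exact_mod_cast this
    have hSk : S.card = k := le_antisymm hcard hkn
    -- F.card ≥ (k-1)*k = offDiag.card, so F = offDiag
    have hFge : S.offDiag.card ≤ F.card := by
      have : ((S.offDiag.card : ℝ)) ≤ F.card := by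
        rw [Finset.offDiag_card]
        have hle : S.card ≤ S.card * S.card := Nat.le_mul_of_pos_left _ hn1
        push_cast [hle]
        have hSkR : (S.card:ℝ) = k := by exact_mod_cast hSk
        nlinarith
      exact_mod_cast this
    have hEq : F = S.offDiag := Finset.eq_of_subset_of_card_le hsub hFge
    refine ⟨S, hSk, ?_⟩
    intro a ha b hb hab
    have : (a, b) ∈ F := by
      rw [hEq]; exact Finset.mem_offDiag.mpr ⟨ha, hb, hab⟩
    simpa [hF] using (Finset.mem_filter.mp this).2
  · rintro ⟨S, hSk, hclique⟩
    have hn1 : 1 ≤ S.card := hSk ▸ hk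
    refine ⟨S, Finset.card_pos.mp hn1, le_of_eq hSk, ?_⟩
    have hEq : ((S ×ˢ S).filter fun p => G.Adj p.1 p.2) = S.offDiag := by
      apply Finset.Subset.antisymm (filter_subset_offDiag G S)
      intro p hp
      obtain ⟨h1, h2, h3⟩ := Finset.mem_offDiag.mp hp
      exact Finset.mem_filter.mpr ⟨Finset.mem_product.mpr ⟨h1, h2⟩, hclique h1 h2 h3⟩
    rw [udens, hEq, Finset.offDiag_card, hSk]
    have hle : k ≤ k * k := Nat.le_mul_of_pos_left _ hk
    have hkpos : (0:ℝ) < k := by exact_mod_cast hk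
    push_cast [hle]
    rw [div_le_div_iff₀ (by norm_num) (by positivity)]
    ring_nf
    nlinarith
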